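/- For n ≥ 2 and any z ∈ ℂ^n, there exist unit vectors ψ, φ ∈ ℂ^n (with respect to the ℓ² norm) such that conj(ψ_k)·φ_k = z_k for all k, if and only if sum_k |z_k| ≤ 1. -/

import Mathlib

lemma norm_sq_ofReal_sqrt (t : ℝ) (ht : 0 ≤ t) : ‖((Real.sqrt t : ℝ) : ℂ)‖^2 = t := by
  rw [Complex.norm_real, Real.norm_eq_abs, abs_of_nonneg (Real.sqrt_nonneg _), Real.sq_sqrt ht]

lemma norm_sq_div_sqrt (w : ℂ) (t : ℝ) (ht : 0 < t) :
    ‖w / ((Real.sqrt t : ℝ) : ℂ)‖^2 = ‖w‖^2 / t := by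
  rw [norm_div, div_pow, Complex.norm_real, Real.norm_eq_abs,
    abs_of_nonneg (Real.sqrt_nonneg _), Real.sq_sqrt ht.le]

lemma conj_sqrt_mul_div (w : ℂ) (t : ℝ) (ht : 0 < t) :
    (starRingEnd ℂ) ((Real.sqrt t : ℝ) : ℂ) * (w / ((Real.sqrt t : ℝ) : ℂ)) = w := by
  have hs : ((Real.sqrt t : ℝ) : ℂ) ≠ 0 := by
    simp only [ne_eq, Complex.ofReal_eq_zero]
    positivity
  rw [Complex.conj_ofReal, mul_div_assoc', mul_comm, mul_div_assoc, div_self hs, mul_one]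


lemma sum_split' {n : ℕ} (i j : Fin n) (hij : i ≠ j) (F : Fin n → ℝ) :
    ∑ k, F k = F i + (F j + ∑ k ∈ (Finset.univ.erase i).erase j, F k) := by
  rw [← Finset.add_sum_erase _ F (Finset.mem_univ i),
      ← Finset.add_sum_erase _ F (Finset.mem_erase.2 ⟨hij.symm, Finset.mem_univ j⟩)]

lemma tail_build {n : ℕ} (i j : Fin n) (hij : i ≠ j) (z : Fin n → ℂ)
    (a c b d : ℂ)
    (hψ : ‖a‖^2 + ‖c‖^2 = ‖z i‖ + ‖z j‖ + (1 - ∑ k, ‖z k‖))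
    (hφ : ‖b‖^2 + ‖d‖^2 = ‖z i‖ + ‖z j‖ + (1 - ∑ k, ‖z k‖))
    (h0 : (starRingEnd ℂ) a * b = z i) (h1 : (starRingEnd ℂ) c * d = z j) :
    ∃ ψ φ : EuclideanSpace ℂ (Fin n), ‖ψ‖ = 1 ∧ ‖φ‖ = 1 ∧
      ∀ k, (starRingEnd ℂ) (ψ k) * φ k = z k := by
  classical
  set ψ : EuclideanSpace ℂ (Fin n) :=
    WithLp.toLp 2 fun k => if k = i then a else if k = j then c else ((Real.sqrt ‖z k‖ : ℝ) : ℂ) with hψdef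
  set φ : EuclideanSpace ℂ (Fin n) :=
    WithLp.toLp 2 fun k => if k = i then b else if k = j then d else z k / ((Real.sqrt ‖z k‖ : ℝ) : ℂ) with hφdef
  have hznn : ∀ k, (0:ℝ) ≤ ‖z k‖ := fun k => norm_nonneg _
  have htail : ∀ k ∈ (Finset.univ.erase i).erase j, k ≠ i ∧ k ≠ j := by
    intro k hk
    exact ⟨(Finset.mem_erase.1 (Finset.mem_erase.1 hk).2).1, (Finset.mem_erase.1 hk).1⟩
  have hψk : ∀ k, k ≠ i → k ≠ j → ‖ψ k‖^2 = ‖z k‖ := by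
    intro k h1 h2
    simp only [hψdef, if_neg h1, if_neg h2]
    rw [Complex.norm_real, Real.norm_eq_abs, abs_of_nonneg (Real.sqrt_nonneg _),
      Real.sq_sqrt (hznn k)]
  have hφk : ∀ k, k ≠ i → k ≠ j → ‖φ k‖^2 = ‖z k‖ := by
    intro k h1 h2
    simp only [hφdef, if_neg h1, if_neg h2]
    by_cases hz : z k = 0
    · simp [hz]
    · have hzn : (0:ℝ) < ‖z k‖ := norm_pos_iff.2 hz
      have hs : Real.sqrt ‖z k‖ ≠ 0 := by positivity
      rw [norm_div, Complex.norm_real, Real.norm_eq_abs, abs_of_nonneg (Real.sqrt_nonneg _),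
        div_pow, Real.sq_sqrt (hznn k), sq, mul_div_assoc, div_self (ne_of_gt hzn), mul_one]
  have hsψ : ∑ k, ‖ψ k‖^2 = 1 := by
    rw [sum_split' i j hij]
    rw [Finset.sum_congr rfl (fun k hk => hψk k (htail k hk).1 (htail k hk).2)]
    have hz : ∑ k, ‖z k‖ = ‖z i‖ + (‖z j‖ + ∑ k ∈ (Finset.univ.erase i).erase j, ‖z k‖) :=
      sum_split' i j hij _
    have e1 : ‖ψ i‖^2 = ‖a‖^2 := by simp [hψdef]
    have e2 : ‖ψ j‖^2 = ‖c‖^2 := by simp [hψdef, hij.symm]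
    rw [e1, e2]
    linarith [hψ]
  have hsφ : ∑ k, ‖φ k‖^2 = 1 := by
    rw [sum_split' i j hij]
    rw [Finset.sum_congr rfl (fun k hk => hφk k (htail k hk).1 (htail k hk).2)]
    have hz : ∑ k, ‖z k‖ = ‖z i‖ + (‖z j‖ + ∑ k ∈ (Finset.univ.erase i).erase j, ‖z k‖) :=
      sum_split' i j hij _
    have e1 : ‖φ i‖^2 = ‖b‖^2 := by simp [hφdef]
    have e2 : ‖φ j‖^2 = ‖d‖^2 := by simp [hφdef, hij.symm]
    rw [e1, e2]
    linarith [hφ]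
  refine ⟨ψ, φ, ?_, ?_, ?_⟩
  · rw [EuclideanSpace.norm_eq]
    simp only [hsψ, Real.sqrt_one]
  · rw [EuclideanSpace.norm_eq]
    simp only [hsφ, Real.sqrt_one]
  · intro k
    by_cases hki : k = i
    · subst hki
      have e1 : ψ k = a := by simp [hψdef]
      have e2 : φ k = b := by simp [hφdef]
      rw [e1, e2, h0]
    by_cases hkj : k = j
    · subst hkj
      have e1 : ψ k = c := by simp [hψdef, hij.symm]
      have e2 : φ k = d := by simp [hφdef, hij.symm]
      rw [e1, e2, h1]
    · have e1 : ψ k = ((Real.sqrt ‖z k‖ : ℝ) : ℂ) := by simp [hψdef, hki, hkj]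
      have e2 : φ k = z k / ((Real.sqrt ‖z k‖ : ℝ) : ℂ) := by simp [hφdef, hki, hkj]
      rw [e1, e2, Complex.conj_ofReal]
      by_cases hz : z k = 0
      · simp [hz]
      · have hzn : (0:ℝ) < ‖z k‖ := norm_pos_iff.2 hz
        have hs : ((Real.sqrt ‖z k‖ : ℝ) : ℂ) ≠ 0 := by
          simp only [ne_eq, Complex.ofReal_eq_zero]
          positivity
        field_simp

theorem stmt_1 (n : ℕ) (hn : 2 ≤ n) (z : Fin n → ℂ) :
    (∃ ψ φ : EuclideanSpace ℂ (Fin n), ‖ψ‖ = 1 ∧ ‖φ‖ = 1 ∧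
      ∀ k, (starRingEnd ℂ) (ψ k) * φ k = z k) ↔
      ∑ k, ‖z k‖ ≤ 1 := by
  have habs : ∀ k, ‖z k‖ = ‖z k‖ := fun k => rfl
  constructor
  · rintro ⟨ψ, φ, hψ, hφ, hk⟩
    have hψ1 : ∑ k, ‖ψ k‖^2 = 1 := by
      have := hψ
      rw [EuclideanSpace.norm_eq, Real.sqrt_eq_one] at this
      exact this
    have hφ1 : ∑ k, ‖φ k‖^2 = 1 := by
      have := hφ
      rw [EuclideanSpace.norm_eq, Real.sqrt_eq_one] at this
      exact this
    have hz : ∀ k, ‖z k‖ = ‖ψ k‖ * ‖φ k‖ := by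
      intro k
      rw [habs k, ← hk k, norm_mul, RCLike.norm_conj]
    have hcs := Finset.sum_mul_sq_le_sq_mul_sq Finset.univ (fun k => ‖ψ k‖) (fun k => ‖φ k‖)
    rw [hψ1, hφ1] at hcs
    have hnn : (0:ℝ) ≤ ∑ k, ‖ψ k‖ * ‖φ k‖ :=
      Finset.sum_nonneg fun k _ => mul_nonneg (norm_nonneg _) (norm_nonneg _)
    calc ∑ k, ‖z k‖ = ∑ k, ‖ψ k‖ * ‖φ k‖ := Finset.sum_congr rfl fun k _ => hz k
      _ ≤ 1 := by nlinarith
  · intro h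
    have h' : ∑ k, ‖z k‖ ≤ 1 := by
      rw [← Finset.sum_congr rfl fun k _ => habs k]
      exact h
    set i : Fin n := ⟨0, by omega⟩ with hi
    set j : Fin n := ⟨1, by omega⟩ with hj
    have hij : i ≠ j := by simp [hi, hj, Fin.ext_iff]
    set s : ℝ := ∑ k, ‖z k‖ with hs
    set a : ℝ := ‖z i‖ with ha
    set b : ℝ := ‖z j‖ with hb
    set T : ℝ := a + b + (1 - s) with hT
    clear_value s a b T
    have ha0 : 0 ≤ a := by rw [ha]; exact norm_nonneg _
    have hb0 : 0 ≤ b := by rw [hb]; exact norm_nonneg _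
    have habT : a + b ≤ T := by rw [hT]; linarith
    have habs' : a + b ≤ s := by
      have hsp := sum_split' i j hij (fun k => ‖z k‖)
      have htl : (0:ℝ) ≤ ∑ k ∈ (Finset.univ.erase i).erase j, ‖z k‖ :=
        Finset.sum_nonneg fun k _ => norm_nonneg _
      rw [ha, hb, hs, hsp]; linarith
    have hT0 : 0 ≤ T := by linarith
    by_cases hzi : z i = 0
    · by_cases hzj : z j = 0
      · -- both zero
        refine tail_build i j hij z ((Real.sqrt T : ℝ) : ℂ) 0 0 ((Real.sqrt T : ℝ) : ℂ) ?_ ?_ ?_ ?_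
        · rw [norm_sq_ofReal_sqrt T hT0, norm_zero, ← ha, ← hb, ← hs, hT]; ring
        · rw [norm_sq_ofReal_sqrt T hT0, norm_zero, ← ha, ← hb, ← hs, hT]; ring
        · simp [hzi]
        · simp [hzj]
      · -- z i = 0, z j ≠ 0
        have hbpos : 0 < b := by rw [hb]; exact norm_pos_iff.2 hzj
        have hTpos : 0 < T := by
          have ha' : a = 0 := by rw [ha, hzi]; simp
          linarith
        have hyT : b^2/T ≤ T := by
          rw [div_le_iff₀ hTpos]
          nlinarith
        have hypos : 0 < b^2/T := by positivity
        refine tail_build i j hij z ((Real.sqrt (T - b^2/T) : ℝ) : ℂ)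
          ((Real.sqrt (b^2/T) : ℝ) : ℂ) 0 (z j / ((Real.sqrt (b^2/T) : ℝ) : ℂ)) ?_ ?_ ?_ ?_
        · rw [norm_sq_ofReal_sqrt _ (by linarith), norm_sq_ofReal_sqrt _ hypos.le,
            ← ha, ← hb, ← hs, hT]; ring
        · rw [norm_sq_div_sqrt _ _ hypos, norm_zero, ← ha, ← hb, ← hs]
          have hbb : b^2/(b^2/T) = T := by
            field_simp
          rw [hbb, hT]; ring
        · simp [hzi]
        · exact conj_sqrt_mul_div _ _ hypos
    · by_cases hzj : z j = 0
      · -- z i ≠ 0, z j = 0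
        have hapos : 0 < a := by rw [ha]; exact norm_pos_iff.2 hzi
        have hTpos : 0 < T := by
          have hb' : b = 0 := by rw [hb, hzj]; simp
          linarith
        have hyT : a^2/T ≤ T := by
          rw [div_le_iff₀ hTpos]
          nlinarith
        have hypos : 0 < a^2/T := by positivity
        refine tail_build i j hij z ((Real.sqrt (a^2/T) : ℝ) : ℂ)
          ((Real.sqrt (T - a^2/T) : ℝ) : ℂ) (z i / ((Real.sqrt (a^2/T) : ℝ) : ℂ)) 0 ?_ ?_ ?_ ?_
        · rw [norm_sq_ofReal_sqrt _ hypos.le, norm_sq_ofReal_sqrt _ (by linarith),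
            ← ha, ← hb, ← hs, hT]; ring
        · rw [norm_sq_div_sqrt _ _ hypos, norm_zero, ← ha, ← hb, ← hs]
          have haa : a^2/(a^2/T) = T := by
            field_simp
          rw [haa, hT]; ring
        · exact conj_sqrt_mul_div _ _ hypos
        · simp [hzj]
      · -- both nonzero
        have hapos : 0 < a := by rw [ha]; exact norm_pos_iff.2 hzi
        have hbpos : 0 < b := by rw [hb]; exact norm_pos_iff.2 hzj
        have hTpos : 0 < T := by linarith
        obtain ⟨S, hS⟩ : ∃ S : ℝ, S = T^2 + a^2 - b^2 := ⟨_, rfl⟩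
        obtain ⟨D, hD⟩ : ∃ D : ℝ, D = S^2 - 4*a^2*T^2 := ⟨_, rfl⟩
        have hSpos : 0 < S := by nlinarith [hS]
        have hD0 : 0 ≤ D := by nlinarith [mul_nonneg (mul_nonneg (mul_nonneg
          (by linarith : (0:ℝ) ≤ T - a - b) (by linarith : (0:ℝ) ≤ T - (a - b)))
          (by linarith : (0:ℝ) ≤ T + (a - b))) (by linarith : (0:ℝ) ≤ T + a + b)]
        have hr2 : Real.sqrt D ^ 2 = D := Real.sq_sqrt hD0
        have hrS : Real.sqrt D < S := by
          rw [Real.sqrt_lt' hSpos]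
          nlinarith [mul_pos (pow_pos hapos 2) (pow_pos hTpos 2)]
        obtain ⟨x, hx⟩ : ∃ x : ℝ, x = (S - Real.sqrt D)/(2*T) := ⟨_, rfl⟩
        have hx0 : 0 < x := by
          rw [hx]
          apply div_pos (by linarith) (by linarith)
        have hxT : x < T := by
          rw [hx, div_lt_iff₀ (by linarith : (0:ℝ) < 2*T)]
          nlinarith [Real.sqrt_nonneg D]
        have hr2' : Real.sqrt D ^ 2 = S^2 - 4*a^2*T^2 := by rw [hr2, hD]
        have hquad : T*x^2 - S*x + a^2*T = 0 := by
          have hTne : T ≠ 0 := ne_of_gt hTpos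
          rw [hx]
          field_simp
          linear_combination hr2'
        have hkey : a^2/x + b^2/(T-x) = T := by
          rw [div_add_div _ _ (ne_of_gt hx0) (ne_of_gt (by linarith : (0:ℝ) < T - x)),
            div_eq_iff (mul_pos hx0 (by linarith : (0:ℝ) < T - x)).ne']
          linear_combination hquad + x * hS
        refine tail_build i j hij z ((Real.sqrt x : ℝ) : ℂ) ((Real.sqrt (T-x) : ℝ) : ℂ)
          (z i / ((Real.sqrt x : ℝ) : ℂ)) (z j / ((Real.sqrt (T-x) : ℝ) : ℂ)) ?_ ?_ ?_ ?_
        · rw [norm_sq_ofReal_sqrt _ hx0.le, norm_sq_ofReal_sqrt _ (by linarith),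
            ← ha, ← hb, ← hs, hT]; ring
        · rw [norm_sq_div_sqrt _ _ hx0, norm_sq_div_sqrt _ _ (by linarith : (0:ℝ) < T - x),
            ← ha, ← hb, ← hs, ← hT]
          exact hkey
        · exact conj_sqrt_mul_div _ _ hx0
        · exact conj_sqrt_mul_div _ _ (by linarith : (0:ℝ) < T - x)
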